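/- (N qubit states of equal purity with the origin in their Bloch polytope.) Let N ≥ 1, f ∈ [0,1], and let v_1,…,v_N ∈ ℝ³ with ‖v_x‖ = f for every x and with the zero vector contained in the convex hull of {v_1,…,v_N}. Let ρ_x = (I + v_x·(σ1,σ2,σ3))/2 be the corresponding Bloch states on ℂ². Then the guessing probability for ρ_1,…,ρ_N with uniform prior probabilities 1/N equals (1 + f)/N, independently of any other details (such as the mutual angles) of the given states. -/

import Mathlib

open BigOperators Matrix
open scoped ComplexOrder

/-- An N-outcome POVM: positive semidefinite elements summing to the identity. -/
def IsPOVM {d N : ℕ} (M : Fin N → Matrix (Fin d) (Fin d) ℂ) : Prop :=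
  (∀ x, (M x).PosSemidef) ∧ ∑ x, M x = 1

/-- The Bloch state `ρ(v) = (I + v₁σ₁ + v₂σ₂ + v₃σ₃)/2` of a Bloch vector `v ∈ ℝ³`. -/
noncomputable def blochState (v : EuclideanSpace ℝ (Fin 3)) : Matrix (Fin 2) (Fin 2) ℂ :=
  (1 / 2 : ℂ) • ((1 : Matrix (Fin 2) (Fin 2) ℂ)
    + (v 0 : ℂ) • !![0, 1; 1, 0]
    + (v 1 : ℂ) • !![0, -Complex.I; Complex.I, 0]
    + (v 2 : ℂ) • !![1, 0; 0, -1])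

noncomputable def Sm (v : EuclideanSpace ℝ (Fin 3)) : Matrix (Fin 2) (Fin 2) ℂ :=
  !![(v 2 : ℂ), (v 0 : ℂ) - Complex.I * (v 1 : ℂ);
     (v 0 : ℂ) + Complex.I * (v 1 : ℂ), -(v 2 : ℂ)]

lemma bloch_eq (v : EuclideanSpace ℝ (Fin 3)) : blochState v = (1/2 : ℂ) • (1 + Sm v) := by
  unfold blochState Sm
  ext i j
  fin_cases i <;> fin_cases j <;> simp [Matrix.one_apply] <;> ring

lemma Sm_herm (v : EuclideanSpace ℝ (Fin 3)) : (Sm v).IsHermitian := by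
  ext i j
  fin_cases i <;> fin_cases j <;>
    simp [Sm, Matrix.conjTranspose_apply, Complex.ext_iff]

lemma norm_sq_eq (v : EuclideanSpace ℝ (Fin 3)) :
    ‖v‖^2 = v 0^2 + v 1^2 + v 2^2 := by
  rw [EuclideanSpace.norm_eq, Real.sq_sqrt (by positivity)]
  simp [Fin.sum_univ_three, sq_abs]

lemma Sm_sq (v : EuclideanSpace ℝ (Fin 3)) :
    Sm v * Sm v = ((‖v‖^2 : ℝ) : ℂ) • 1 := by
  rw [norm_sq_eq]
  ext i j
  fin_cases i <;> fin_cases j <;>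
    simp [Sm, Matrix.mul_apply, Fin.sum_univ_two, Matrix.one_apply, Complex.ext_iff,
      pow_two, Complex.mul_re, Complex.mul_im] <;>
    (try constructor) <;> ring

lemma Sm_trace (v : EuclideanSpace ℝ (Fin 3)) : (Sm v).trace = 0 := by
  simp [Sm, Matrix.trace_fin_two]

lemma Sm_zero : Sm 0 = 0 := by
  ext i j
  fin_cases i <;> fin_cases j <;> simp [Sm]

lemma Sm_neg (v : EuclideanSpace ℝ (Fin 3)) : Sm (-v) = -Sm v := by
  ext i j
  fin_cases i <;> fin_cases j <;> simp [Sm] <;> ring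

lemma psd_smul {n : ℕ} {A : Matrix (Fin n) (Fin n) ℂ} (hA : A.PosSemidef) {c : ℝ}
    (hc : 0 ≤ c) : ((c : ℂ) • A).PosSemidef := by
  refine Matrix.PosSemidef.of_dotProduct_mulVec_nonneg ?_ ?_
  · unfold Matrix.IsHermitian
    rw [Matrix.conjTranspose_smul, hA.1.eq]
    simp [Complex.conj_ofReal]
  · intro x
    rw [Matrix.smul_mulVec, dotProduct_smul]
    exact mul_nonneg (by exact_mod_cast Complex.zero_le_real.mpr hc) (hA.dotProduct_mulVec_nonneg x)

lemma psd_of_sq {B : Matrix (Fin 2) (Fin 2) ℂ} (hH : B.IsHermitian) {c : ℝ} (hc : 0 ≤ c)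
    (hsq : B * B = (c : ℂ) • B) : B.PosSemidef := by
  rcases eq_or_lt_of_le hc with h0 | hpos
  · have h : Bᴴ * B = 0 := by rw [hH.eq, hsq, ← h0]; simp
    rw [Matrix.conjTranspose_mul_self_eq_zero.mp h]
    exact Matrix.PosSemidef.zero
  · have h : B = ((c⁻¹ : ℝ) : ℂ) • (Bᴴ * B) := by
      rw [hH.eq, hsq, smul_smul]
      norm_cast
      rw [inv_mul_cancel₀ (ne_of_gt hpos)]
      simp
    rw [h]
    exact psd_smul (Matrix.posSemidef_conjTranspose_mul_self B) (inv_nonneg.mpr hc)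

lemma psd_trace_nonneg {n : ℕ} {A : Matrix (Fin n) (Fin n) ℂ} (hA : A.PosSemidef) :
    0 ≤ A.trace := by
  rw [Matrix.trace]
  apply Finset.sum_nonneg
  intro i _
  exact hA.diag_nonneg

open scoped MatrixOrder in
lemma psd_trace_mul_nonneg {n : ℕ} {A B : Matrix (Fin n) (Fin n) ℂ}
    (hA : A.PosSemidef) (hB : B.PosSemidef) : 0 ≤ (A * B).trace := by
  have h1 : A * B = CFC.sqrt A * (CFC.sqrt A * B) := by
    rw [← mul_assoc, CFC.sqrt_mul_sqrt_self A hA.nonneg]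
  rw [h1, Matrix.trace_mul_comm]
  have h := hB.conjTranspose_mul_mul_same (CFC.sqrt A)
  rw [(CFC.sqrt_nonneg A).posSemidef.1.eq] at h
  exact psd_trace_nonneg h

lemma psd_one_add {f : ℝ} (hf0 : 0 ≤ f) (u : EuclideanSpace ℝ (Fin 3)) (hu : ‖u‖ = f) :
    ((f : ℂ) • (1 : Matrix (Fin 2) (Fin 2) ℂ) + Sm u).PosSemidef := by
  apply psd_of_sq (c := 2 * f) _ (by positivity)
  · have hsq : Sm u * Sm u = ((f^2 : ℝ) : ℂ) • 1 := by rw [Sm_sq, hu]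
    rw [add_mul, mul_add, mul_add, hsq]
    simp only [smul_mul_assoc, mul_smul_comm, one_mul, mul_one, smul_smul]
    push_cast
    module
  · unfold Matrix.IsHermitian
    rw [Matrix.conjTranspose_add, Matrix.conjTranspose_smul, Matrix.conjTranspose_one,
      (Sm_herm u).eq]
    simp [Complex.conj_ofReal]

lemma euclid_sum_apply {N : ℕ} (p : Fin N → ℝ) (v : Fin N → EuclideanSpace ℝ (Fin 3)) (j : Fin 3) :
    (∑ x, p x • v x) j = ∑ x, p x * v x j := by
  induction' (Finset.univ : Finset (Fin N)) using Finset.induction with a s ha ih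
  · simp
  · rw [Finset.sum_insert ha, Finset.sum_insert ha, ← ih]
    rfl

lemma Sm_sum {N : ℕ} (p : Fin N → ℝ) (v : Fin N → EuclideanSpace ℝ (Fin 3)) :
    ∑ x, ((p x : ℝ) : ℂ) • Sm (v x) = Sm (∑ x, p x • v x) := by
  ext i j
  fin_cases i <;> fin_cases j <;>
    simp [Sm, Matrix.sum_apply, euclid_sum_apply, Finset.mul_sum, ← Finset.sum_add_distrib,
      ← Finset.sum_sub_distrib, mul_sub, mul_add] <;>
    exact Finset.sum_congr rfl fun x _ => by ring

lemma hull_weights {N : ℕ} (v : Fin N → EuclideanSpace ℝ (Fin 3))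
    (hhull : (0 : EuclideanSpace ℝ (Fin 3)) ∈ convexHull ℝ (Set.range v)) :
    ∃ p : Fin N → ℝ, (∀ x, 0 ≤ p x) ∧ ∑ x, p x = 1 ∧ ∑ x, p x • v x = 0 := by
  rw [convexHull_range_eq_exists_affineCombination] at hhull
  obtain ⟨s, w, hw0, hw1, hw⟩ := hhull
  refine ⟨fun x => if x ∈ s then w x else 0,
    fun x => by by_cases h : x ∈ s <;> simp [h, hw0 x], ?_, ?_⟩
  · rw [Finset.sum_ite_mem, Finset.univ_inter, hw1]
  · rw [Finset.affineCombination_eq_linear_combination s v w hw1] at hw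
    rw [← hw]
    simp [ite_smul, Finset.sum_ite_mem]

/-- N equal-purity qubit states whose Bloch polytope contains the
origin: if `‖v_x‖ = f` for `x = 1, …, N` and `0` lies in the convex hull of the Bloch
vectors, then the guessing probability with uniform priors `1/N` is `(1 + f)/N`. -/
theorem equal_purity_bloch_states_guessing_probability
    (N : ℕ) (hN : 1 ≤ N)
    (f : ℝ) (hf : f ∈ Set.Icc (0 : ℝ) 1)
    (v : Fin N → EuclideanSpace ℝ (Fin 3))
    (hnorm : ∀ x, ‖v x‖ = f)
    (hhull : (0 : EuclideanSpace ℝ (Fin 3)) ∈ convexHull ℝ (Set.range v)) :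
    IsGreatest {w : ℝ | ∃ M : Fin N → Matrix (Fin 2) (Fin 2) ℂ, IsPOVM M ∧
        w = ∑ x, (1 / (N : ℝ)) * ((M x * blochState (v x)).trace).re}
      ((1 + f) / N) := by
  obtain ⟨hf0, hf1⟩ := hf
  have hNpos : (0 : ℝ) < N := by exact_mod_cast hN
  have hNne : (N : ℝ) ≠ 0 := ne_of_gt hNpos
  obtain ⟨p, hp0, hp1, hpv⟩ := hull_weights v hhull
  constructor
  · -- membership: construct an optimal POVM
    rcases eq_or_lt_of_le hf0 with hf00 | hfpos
    · -- f = 0 : all Bloch vectors are zero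
      have hv0 : ∀ x, v x = 0 := fun x => norm_eq_zero.mp (by rw [hnorm x, ← hf00])
      refine ⟨fun x => ((p x : ℝ) : ℂ) • 1, ⟨fun x => psd_smul Matrix.PosSemidef.one (hp0 x), ?_⟩, ?_⟩
      · rw [← Finset.sum_smul]
        have : (∑ x, ((p x : ℝ) : ℂ)) = ((1 : ℝ) : ℂ) := by push_cast [← hp1]; ring
        rw [this, Complex.ofReal_one, one_smul]
      · have hcalc : ∀ x : Fin N, ((((p x : ℝ) : ℂ) • 1 * blochState (v x)).trace).re = p x := by
          intro x
          rw [bloch_eq, hv0 x, Sm_zero]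
          simp [Matrix.trace_smul, Matrix.trace_one]
          ring
        rw [Finset.sum_congr rfl fun x _ => by rw [hcalc x]]
        rw [← Finset.mul_sum, hp1, ← hf00]
        ring
    · -- f > 0
      have hfne : f ≠ 0 := ne_of_gt hfpos
      refine ⟨fun x => ((p x : ℝ) : ℂ) • ((1 : Matrix (Fin 2) (Fin 2) ℂ)
          + ((f⁻¹ : ℝ) : ℂ) • Sm (v x)), ⟨fun x => ?_, ?_⟩, ?_⟩
      · apply psd_smul _ (hp0 x)
        have h : (1 : Matrix (Fin 2) (Fin 2) ℂ) + ((f⁻¹ : ℝ) : ℂ) • Sm (v x)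
            = ((f⁻¹ : ℝ) : ℂ) • ((f : ℂ) • 1 + Sm (v x)) := by
          rw [smul_add, smul_smul]
          norm_cast
          rw [inv_mul_cancel₀ hfne]
          simp
        rw [h]
        exact psd_smul (psd_one_add hf0 (v x) (hnorm x)) (inv_nonneg.mpr hf0)
      · -- sums to identity
        have hsum : ∑ x, ((p x : ℝ) : ℂ) • ((1 : Matrix (Fin 2) (Fin 2) ℂ)
            + ((f⁻¹ : ℝ) : ℂ) • Sm (v x))
            = (∑ x, ((p x : ℝ) : ℂ)) • (1 : Matrix (Fin 2) (Fin 2) ℂ)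
              + ((f⁻¹ : ℝ) : ℂ) • ∑ x, ((p x : ℝ) : ℂ) • Sm (v x) := by
          rw [Finset.sum_smul, Finset.smul_sum, ← Finset.sum_add_distrib]
          exact Finset.sum_congr rfl fun x _ => by rw [smul_add, smul_comm]
        rw [hsum, Sm_sum, hpv, Sm_zero, smul_zero, add_zero]
        have : (∑ x, ((p x : ℝ) : ℂ)) = ((1 : ℝ) : ℂ) := by push_cast [← hp1]; ring
        rw [this, Complex.ofReal_one, one_smul]
      · -- the value
        have hcalc : ∀ x : Fin N, (((((p x : ℝ) : ℂ) • ((1 : Matrix (Fin 2) (Fin 2) ℂ)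
            + ((f⁻¹ : ℝ) : ℂ) • Sm (v x))) * blochState (v x)).trace).re = p x * (1 + f) := by
          intro x
          have hsq : Sm (v x) * Sm (v x) = ((f^2 : ℝ) : ℂ) • 1 := by rw [Sm_sq, hnorm x]
          rw [bloch_eq, smul_mul_assoc]
          have htr : ((1 + ((f⁻¹ : ℝ) : ℂ) • Sm (v x)) * ((1/2 : ℂ) • (1 + Sm (v x)))).trace
              = (((1 + f) : ℝ) : ℂ) := by
            rw [mul_smul_comm, add_mul, one_mul, smul_mul_assoc, mul_add, mul_one, hsq]
            simp only [Matrix.trace_smul, Matrix.trace_add, Matrix.trace_one, Sm_trace,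
              smul_smul, smul_eq_mul]
            push_cast
            field_simp
            simp only [Fintype.card_fin]; push_cast; ring
          rw [Matrix.trace_smul, htr, smul_eq_mul, ← Complex.ofReal_mul, Complex.ofReal_re]
        rw [Finset.sum_congr rfl fun x _ => by rw [hcalc x]]
        have : ∑ x, 1/(N:ℝ) * (p x * (1+f)) = (1+f)/N * ∑ x, p x := by
          rw [Finset.mul_sum]
          exact Finset.sum_congr rfl fun x _ => by ring
        rw [this, hp1, mul_one]
  · -- upper bound
    rintro w ⟨M, ⟨hMpsd, hMsum⟩, rfl⟩
    have key : ∀ x, ((M x * blochState (v x)).trace).re ≤ (1+f)/2 * ((M x).trace).re := by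
      intro x
      -- PSD of f•1 - Sm (v x)
      have hpsdB : ((f : ℂ) • (1 : Matrix (Fin 2) (Fin 2) ℂ) - Sm (v x)).PosSemidef := by
        have h := psd_one_add hf0 (-(v x)) (by rw [norm_neg]; exact hnorm x)
        rw [Sm_neg, ← sub_eq_add_neg] at h
        exact h
      have h0 : 0 ≤ (M x * ((f : ℂ) • 1 - Sm (v x))).trace :=
        psd_trace_mul_nonneg (hMpsd x) hpsdB
      have hexp : (M x * ((f : ℂ) • 1 - Sm (v x))).trace
          = (f : ℂ) * (M x).trace - (M x * Sm (v x)).trace := by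
        rw [mul_sub, Matrix.trace_sub, mul_smul_comm, Matrix.trace_smul, mul_one, smul_eq_mul]
      rw [hexp] at h0
      have h0' : 0 ≤ ((f : ℂ) * (M x).trace - (M x * Sm (v x)).trace).re :=
        (Complex.le_def.mp h0).1
      have hb : (M x * blochState (v x)).trace
          = (1/2 : ℂ) * ((M x).trace + (M x * Sm (v x)).trace) := by
        rw [bloch_eq, mul_smul_comm, Matrix.trace_smul, mul_add, mul_one, Matrix.trace_add,
          smul_eq_mul]
      rw [hb]
      simp only [Complex.mul_re, Complex.sub_re, Complex.add_re, Complex.add_im,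
        Complex.ofReal_re, Complex.ofReal_im, Complex.one_re, Complex.one_im,
        Complex.div_re, Complex.div_im] at h0' ⊢
      norm_num at h0' ⊢
      nlinarith [h0']
    have htr : ∑ x, ((M x).trace).re = 2 := by
      have h1 : ∑ x, ((M x).trace) = (2 : ℂ) := by
        rw [← Matrix.trace_sum, hMsum]
        simp [Matrix.trace_one]
      calc ∑ x, ((M x).trace).re = ((∑ x, (M x).trace)).re := by
            rw [Complex.re_sum]
        _ = 2 := by rw [h1]; norm_num
    calc ∑ x, 1/(N:ℝ) * ((M x * blochState (v x)).trace).re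
        ≤ ∑ x, 1/(N:ℝ) * ((1+f)/2 * ((M x).trace).re) := by
          apply Finset.sum_le_sum
          intro x _
          exact mul_le_mul_of_nonneg_left (key x) (by positivity)
      _ = 1/(N:ℝ) * ((1+f)/2) * ∑ x, ((M x).trace).re := by
          rw [Finset.mul_sum]
          exact Finset.sum_congr rfl fun x _ => by ring
      _ = (1+f)/N := by rw [htr]; field_simp
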